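/- Substitution lemma: (1) if Γ ⊢ t : T is derivable in Add, then for any type variable X and unit type U, Γ[U/X] ⊢ t : T[U/X] is derivable in Add; (2) if Γ, x:U ⊢ t : T and Γ ⊢ v : U are derivable in Add, where v is a value, then Γ ⊢ t[v/x] : T is derivable in Add. -/
import Mathlib


set_option maxHeartbeats 1000000

/-! ## Terms of the non-deterministic call-by-value λ-calculus (de Bruijn indices) -/

inductive Tm : Type
  | var : ℕ → Tm
  | lam : Tm → Tm
  | app : Tm → Tm → Tm
  | add : Tm → Tm → Tm
  | zero : Tm
  deriving DecidableEq

namespace Tm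

/-- Values: variables and abstractions. -/
inductive IsValue : Tm → Prop
  | var (n : ℕ) : IsValue (var n)
  | lam (t : Tm) : IsValue (lam t)

/-- de Bruijn shifting: add `d` to every variable index `≥ c`. -/
def shift (d c : ℕ) : Tm → Tm
  | var n => if n < c then var n else var (n + d)
  | lam t => lam (shift d (c + 1) t)
  | app t u => app (shift d c t) (shift d c u)
  | add t u => add (shift d c t) (shift d c u)
  | zero => zero

/-- Capture-avoiding substitution of the variable `k` by `v` (removing the binder). -/
def subst (k : ℕ) (v : Tm) : Tm → Tm
  | var n => if n = k then shift k 0 v else if k < n then var (n - 1) else var n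
  | lam t => lam (subst (k + 1) v t)
  | app t u => app (subst k v t) (subst k v u)
  | add t u => add (subst k v t) (subst k v u)
  | zero => zero

/-- `ClosedUnder k t`: every free variable of `t` has index `< k`. -/
def ClosedUnder (k : ℕ) : Tm → Prop
  | var n => n < k
  | lam t => ClosedUnder (k + 1) t
  | app t u => ClosedUnder k t ∧ ClosedUnder k u
  | add t u => ClosedUnder k t ∧ ClosedUnder k u
  | zero => True

/-- Closed terms. -/
def Closed (t : Tm) : Prop := ClosedUnder 0 t

end Tm

open Tm

/-- The AC-equivalence on terms: the least congruence making `+`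
associative and commutative (terms are considered modulo `Aeq`). -/
inductive Aeq : Tm → Tm → Prop
  | refl (t : Tm) : Aeq t t
  | symm : Aeq t u → Aeq u t
  | trans : Aeq t u → Aeq u s → Aeq t s
  | comm (t u : Tm) : Aeq (.add t u) (.add u t)
  | assoc (t u s : Tm) : Aeq (.add t (.add u s)) (.add (.add t u) s)
  | lamCongr : Aeq t t' → Aeq (.lam t) (.lam t')
  | appCongr : Aeq t t' → Aeq u u' → Aeq (.app t u) (.app t' u')
  | addCongr : Aeq t t' → Aeq u u' → Aeq (.add t u) (.add t' u')

/-- One-step reduction (the five rewrite rules plus β, closed under all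
contexts, and performed modulo the AC-equivalence of terms). -/
inductive Step : Tm → Tm → Prop
  | distrRight (t u s : Tm) : Step (.app (.add t u) s) (.add (.app t s) (.app u s))
  | distrLeft (t u s : Tm) : Step (.app t (.add u s)) (.add (.app t u) (.app t s))
  | zeroApp (t : Tm) : Step (.app .zero t) .zero
  | appZero (t : Tm) : Step (.app t .zero) .zero
  | addZero (t : Tm) : Step (.add t .zero) t
  | beta (t v : Tm) : IsValue v → Step (.app (.lam t) v) (Tm.subst 0 v t)
  | appLeft : Step t t' → Step (.app t u) (.app t' u)
  | appRight : Step u u' → Step (.app t u) (.app t u')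
  | addLeft : Step t t' → Step (.add t u) (.add t' u)
  | addRight : Step u u' → Step (.add t u) (.add t u')
  | lamCongr : Step t t' → Step (.lam t) (.lam t')
  | ac : Aeq t t' → Step t' u' → Aeq u' u → Step t u

/-- Strong normalisation of a term: accessibility of the inverse reduction. -/
def SN (t : Tm) : Prop := Acc (fun a b => Step b a) t

/-- The set of strongly normalising closed terms. -/
def SNset : Set Tm := {t | Closed t ∧ SN t}

/-- Pseudo-values: abstractions and sums of pseudo-values. -/
inductive PseudoValue : Tm → Prop
  | lam (t : Tm) : PseudoValue (.lam t)
  | add : PseudoValue t → PseudoValue u → PseudoValue (.add t u)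

/-- Neutral terms: closed terms that are not pseudo-values. -/
def Neutral (t : Tm) : Prop := Closed t ∧ ¬ PseudoValue t

/-- The set of one-step reducts of `t`. -/
def Red (t : Tm) : Set Tm := {u | Step t u}

/-- The set of reducts (in any number of steps, including zero) of terms of `S`. -/
def RedStar (S : Set Tm) : Set Tm := {u | ∃ t ∈ S, Relation.ReflTransGen Step t u}

/-- The closure of a set of terms under (CR3). -/
inductive Clo (S : Set Tm) : Tm → Prop
  | base {t : Tm} : t ∈ S → Clo S t
  | step {t : Tm} : Neutral t → (∀ u, Step t u → Clo S u) → Clo S t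

/-- `clo S`: the least set containing `S` and closed under (CR3). -/
def clo (S : Set Tm) : Set Tm := {t | Clo S t}

/-- Reducibility candidates. -/
structure IsCandidate (A : Set Tm) : Prop where
  cr1 : A ⊆ SNset
  cr2 : ∀ t ∈ A, Red t ⊆ A
  cr3 : ∀ t, Neutral t → Red t ⊆ A → t ∈ A

/-- The arrow operator on sets of closed terms. -/
def CArrow (A B : Set Tm) : Set Tm := {t | Closed t ∧ ∀ u ∈ A, Tm.app t u ∈ B}

/-- The sum of two sets of (AC-classes of) terms. -/
def CSum (A B : Set Tm) : Set Tm := {s | ∃ t ∈ A, ∃ u ∈ B, Aeq s (Tm.add t u)}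

/-- The ⊞ operator on reducibility candidates. -/
def CPlus (A B : Set Tm) : Set Tm := clo (CSum A B ∪ A ∪ B)

/-! ## Types of the Add type system -/

mutual
  /-- Unit types. -/
  inductive UTy : Type
    | var : ℕ → UTy
    | arrow : UTy → Ty → UTy
    | all : UTy → UTy

  /-- Types. -/
  inductive Ty : Type
    | unit : UTy → Ty
    | add : Ty → Ty → Ty
    | zero : Ty
end

mutual
  /-- Shifting of type variables in unit types. -/
  def UTy.shift (d c : ℕ) : UTy → UTy
    | .var n => if n < c then .var n else .var (n + d)
    | .arrow U T => .arrow (UTy.shift d c U) (Ty.shift d c T)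
    | .all U => .all (UTy.shift d (c + 1) U)

  /-- Shifting of type variables in types. -/
  def Ty.shift (d c : ℕ) : Ty → Ty
    | .unit U => .unit (UTy.shift d c U)
    | .add T R => .add (Ty.shift d c T) (Ty.shift d c R)
    | .zero => .zero
end

mutual
  /-- Substitution of the (bound) type variable `k` by `V` in a unit type. -/
  def UTy.subst (k : ℕ) (V : UTy) : UTy → UTy
    | .var n => if n = k then UTy.shift k 0 V else if k < n then .var (n - 1) else .var n
    | .arrow U T => .arrow (UTy.subst k V U) (Ty.subst k V T)
    | .all U => .all (UTy.subst (k + 1) V U)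

  /-- Substitution of the (bound) type variable `k` by `V` in a type. -/
  def Ty.subst (k : ℕ) (V : UTy) : Ty → Ty
    | .unit U => .unit (UTy.subst k V U)
    | .add T R => .add (Ty.subst k V T) (Ty.subst k V R)
    | .zero => .zero
end

/-- Iterated substitution `U[V⃗/X⃗]` for a unit type under `|Vs|` quantifiers. -/
def UTy.msubst (Vs : List UTy) (U : UTy) : UTy := Vs.foldl (fun A V => UTy.subst 0 V A) U

/-- Iterated substitution `T[V⃗/X⃗]` for a type under `|Vs|` quantifiers. -/
def Ty.msubst (Vs : List UTy) (T : Ty) : Ty := Vs.foldl (fun A V => Ty.subst 0 V A) T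

mutual
  /-- Substitution of the free type variable `X` (seen at depth `c`) by `V` in a unit type. -/
  def UTy.replAux (X : ℕ) (V : UTy) (c : ℕ) : UTy → UTy
    | .var n => if n = X + c then UTy.shift c 0 V else .var n
    | .arrow U T => .arrow (UTy.replAux X V c U) (Ty.replAux X V c T)
    | .all U => .all (UTy.replAux X V (c + 1) U)

  /-- Substitution of the free type variable `X` (seen at depth `c`) by `V` in a type. -/
  def Ty.replAux (X : ℕ) (V : UTy) (c : ℕ) : Ty → Ty
    | .unit U => .unit (UTy.replAux X V c U)
    | .add T R => .add (Ty.replAux X V c T) (Ty.replAux X V c R)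
    | .zero => .zero
end

/-- Capture-avoiding substitution `U[V/X]` of a free type variable. -/
def UTy.repl (X : ℕ) (V : UTy) (U : UTy) : UTy := UTy.replAux X V 0 U

/-- Capture-avoiding substitution `T[V/X]` of a free type variable. -/
def Ty.repl (X : ℕ) (V : UTy) (T : Ty) : Ty := Ty.replAux X V 0 T

mutual
  /-- Abstraction of the free type variable `X` (at depth `c`), used to form `∀X.U`. -/
  def UTy.absAux (X c : ℕ) : UTy → UTy
    | .var n => if n = X + c then .var c else if c ≤ n then .var (n + 1) else .var n
    | .arrow U T => .arrow (UTy.absAux X c U) (Ty.absAux X c T)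
    | .all U => .all (UTy.absAux X (c + 1) U)

  /-- Abstraction of the free type variable `X` (at depth `c`) in a type. -/
  def Ty.absAux (X c : ℕ) : Ty → Ty
    | .unit U => .unit (UTy.absAux X c U)
    | .add T R => .add (Ty.absAux X c T) (Ty.absAux X c R)
    | .zero => .zero
end

/-- `∀X.U`: universal quantification of the free type variable `X` in `U`. -/
def UTy.genAll (X : ℕ) (U : UTy) : UTy := .all (UTy.absAux X 0 U)

mutual
  /-- `X` occurs free in a unit type. -/
  def UTy.Free (n : ℕ) : UTy → Prop
    | .var m => m = n
    | .arrow U T => UTy.Free n U ∨ Ty.Free n T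
    | .all U => UTy.Free (n + 1) U

  /-- `X` occurs free in a type. -/
  def Ty.Free (n : ℕ) : Ty → Prop
    | .unit U => UTy.Free n U
    | .add T R => Ty.Free n T ∨ Ty.Free n R
    | .zero => False
end

mutual
  /-- Equivalence of unit types (the least congruence making `+` on types
  associative, commutative, with neutral element `𝟘`). -/
  inductive UEq : UTy → UTy → Prop
    | refl (U : UTy) : UEq U U
    | symm : UEq U V → UEq V U
    | trans : UEq U V → UEq V W → UEq U W
    | arrow : UEq U U' → TEq T T' → UEq (.arrow U T) (.arrow U' T')
    | all : UEq U U' → UEq (.all U) (.all U')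

  /-- Equivalence of types: the least congruence such that
  `T+R ≡ R+T`, `T+(R+S) ≡ (T+R)+S` and `T+𝟘 ≡ T`. -/
  inductive TEq : Ty → Ty → Prop
    | refl (T : Ty) : TEq T T
    | symm : TEq T R → TEq R T
    | trans : TEq T R → TEq R S → TEq T S
    | unit : UEq U U' → TEq (.unit U) (.unit U')
    | addCongr : TEq T T' → TEq R R' → TEq (.add T R) (.add T' R')
    | comm (T R : Ty) : TEq (.add T R) (.add R T)
    | assoc (T R S : Ty) : TEq (.add T (.add R S)) (.add (.add T R) S)
    | zero (T : Ty) : TEq (.add T .zero) T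
end

/-- `Σ_{i} T_i`, with the empty sum being `𝟘`. -/
def sumT (Ts : List Ty) : Ty := Ts.foldl Ty.add Ty.zero

/-- `∀X₁.…∀X_k.U`. -/
def allN : ℕ → UTy → UTy
  | 0, U => U
  | k + 1, U => .all (allN k U)

/-- Lifting of type variables in a typing context (for ∀-introduction). -/
def liftCtx (Γ : List UTy) : List UTy := Γ.map (UTy.shift 1 0)

/-! ## The Add type system -/

/-- Typing judgements of the Add type system. -/
inductive Typing : List UTy → Tm → Ty → Prop
  | ax {Γ : List UTy} {n : ℕ} {U : UTy} : Γ[n]? = some U → Typing Γ (.var n) (.unit U)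
  | axZero {Γ : List UTy} : Typing Γ .zero .zero
  | equiv {Γ t T R} : Typing Γ t T → TEq T R → Typing Γ t R
  | arrI {Γ U t T} : Typing (U :: Γ) t T → Typing Γ (.lam t) (.unit (.arrow U T))
  | arrE {Γ t u} {k : ℕ} {U : UTy} {Ts : List Ty} {Vs : List (List UTy)} :
      Ts ≠ [] → Vs ≠ [] → (∀ V ∈ Vs, V.length = k) →
      Typing Γ t (sumT (Ts.map fun Ti => .unit (allN k (.arrow U Ti)))) →
      Typing Γ u (sumT (Vs.map fun Vj => .unit (UTy.msubst Vj U))) →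
      Typing Γ (.app t u)
        (sumT ((Ts.map fun Ti => Vs.map fun Vj => Ty.msubst Vj Ti).flatten))
  | addI {Γ t u T R} : Typing Γ t T → Typing Γ u R → Typing Γ (.add t u) (.add T R)
  | allE {Γ t U} (V : UTy) : Typing Γ t (.unit (.all U)) → Typing Γ t (.unit (UTy.subst 0 V U))
  | allI {Γ t U} : Typing (liftCtx Γ) t (.unit U) → Typing Γ t (.unit (.all U))

/-! ## Interpretation of types by reducibility candidates -/

/-- Extension of a valuation. -/
def consV (A : Set Tm) (ρ : ℕ → Set Tm) : ℕ → Set Tm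
  | 0 => A
  | n + 1 => ρ n

mutual
  /-- Interpretation of unit types. -/
  def interpU : UTy → (ℕ → Set Tm) → Set Tm
    | .var n, ρ => ρ n
    | .arrow U T, ρ => CArrow (interpU U ρ) (interpT T ρ)
    | .all U, ρ => {t | ∀ A : Set Tm, IsCandidate A → t ∈ interpU U (consV A ρ)}

  /-- Interpretation of types. -/
  def interpT : Ty → (ℕ → Set Tm) → Set Tm
    | .unit U, ρ => interpU U ρ
    | .add T R, ρ => CPlus (interpT T ρ) (interpT R ρ)
    | .zero, _ => clo ∅
end

/-- Lifting of a simultaneous substitution under a binder. -/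
def liftSub (σ : ℕ → Tm) : ℕ → Tm
  | 0 => .var 0
  | n + 1 => Tm.shift 1 0 (σ n)

/-- Simultaneous substitution `t_σ` of all free term variables of `t`. -/
def Tm.msubst (σ : ℕ → Tm) : Tm → Tm
  | .var n => σ n
  | .lam t => .lam (Tm.msubst (liftSub σ) t)
  | .app t u => .app (Tm.msubst σ t) (Tm.msubst σ u)
  | .add t u => .add (Tm.msubst σ t) (Tm.msubst σ u)
  | .zero => .zero

/-! ## The relations ⋖ and ≼ on types -/

/-- The relation `⋖` on unit types: `U₁ ⋖ U₂` iff either `U₂ ≡ ∀X.U₁`, or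
`U₁ ≡ ∀X.U'` and `U₂ ≡ U'[V/X]`. -/
inductive SSub : UTy → UTy → Prop
  | gen {U₁ U₂ : UTy} (X : ℕ) : UEq U₂ (UTy.genAll X U₁) → SSub U₁ U₂
  | inst {U₁ U₂ : UTy} (U' V : UTy) : UEq U₁ (.all U') → UEq U₂ (UTy.subst 0 V U') →
      SSub U₁ U₂

/-- The relation `≼`: the reflexive (with respect to `≡`) and transitive
closure of `⋖`, on types. -/
inductive TPre : Ty → Ty → Prop
  | ofEq : TEq T T' → TPre T T'
  | ofSSub {U V : UTy} : SSub U V → TPre (.unit U) (.unit V)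
  | trans : TPre T T' → TPre T' T'' → TPre T T''

/-! ## Trees and the structured type system Add_struct -/

/-- Binary trees with two kinds of leaves: `ℓ`-leaves and `𝟘`-leaves. -/
inductive ATree : Type
  | leaf : ATree
  | zleaf : ATree
  | node : ATree → ATree → ATree
  deriving DecidableEq

namespace ATree

/-- ATree composition: branch a copy of `A'` at each `ℓ`-leaf of `A`. -/
def comp : ATree → ATree → ATree
  | .leaf, A' => A'
  | .zleaf, _ => .zleaf
  | .node A B, A' => .node (comp A A') (comp B A')

/-- `LeafAt A w`: the word `w` (over `{l,r}`, here `{false,true}`) is the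
address of an `ℓ`-leaf of `A`. -/
inductive LeafAt : ATree → List Bool → Prop
  | leaf : LeafAt .leaf []
  | left {A B w} : LeafAt A w → LeafAt (.node A B) (false :: w)
  | right {A B w} : LeafAt B w → LeafAt (.node A B) (true :: w)

/-- Labelling of the `ℓ`-leaves of a tree by unit types, yielding a type. -/
def labelU : ATree → (List Bool → UTy) → Ty
  | .leaf, f => .unit (f [])
  | .zleaf, _ => .zero
  | .node A B, f => .add (labelU A fun w => f (false :: w)) (labelU B fun w => f (true :: w))

/-- Labelling of the `ℓ`-leaves of a tree by types, yielding a type. -/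
def labelT : ATree → (List Bool → Ty) → Ty
  | .leaf, f => f []
  | .zleaf, _ => .zero
  | .node A B, f => .add (labelT A fun w => f (false :: w)) (labelT B fun w => f (true :: w))

/-- Split an address of a leaf of `A ∘ A'` into the `A`-part and the `A'`-part. -/
def split : ATree → List Bool → List Bool × List Bool
  | .leaf, p => ([], p)
  | .zleaf, p => ([], p)
  | .node A _, false :: p => ((split A p).1.cons false, (split A p).2)
  | .node _ B, true :: p => ((split B p).1.cons true, (split B p).2)
  | .node _ _, [] => ([], [])

end ATree

/-- Typing derivations of the structured type system Add_struct. -/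
inductive SDeriv : List UTy → Tm → Ty → Type
  | ax (Γ : List UTy) (n : ℕ) (U : UTy) (h : Γ[n]? = some U) : SDeriv Γ (.var n) (.unit U)
  | axZero (Γ : List UTy) : SDeriv Γ .zero .zero
  | arrI {Γ U t T} (D : SDeriv (U :: Γ) t T) : SDeriv Γ (.lam t) (.unit (.arrow U T))
  | addI {Γ t u T R} (D₁ : SDeriv Γ t T) (D₂ : SDeriv Γ u R) :
      SDeriv Γ (.add t u) (.add T R)
  | allE {Γ t U} (V : UTy) (D : SDeriv Γ t (.unit (.all U))) :
      SDeriv Γ t (.unit (UTy.subst 0 V U))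
  | allI {Γ t U} (D : SDeriv (liftCtx Γ) t (.unit U)) : SDeriv Γ t (.unit (.all U))
  | arrE {Γ t u} (A A' : ATree) (k : ℕ) (U : UTy) (Tf : List Bool → Ty)
      (Vf : List Bool → List UTy)
      (hlen : ∀ v, A'.LeafAt v → (Vf v).length = k)
      (D₁ : SDeriv Γ t (A.labelU fun w => allN k (.arrow U (Tf w))))
      (D₂ : SDeriv Γ u (A'.labelU fun v => UTy.msubst (Vf v) U)) :
      SDeriv Γ (.app t u)
        ((A.comp A').labelT fun p => Ty.msubst (Vf (A.split p).2) (Tf (A.split p).1))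

/-! ## System F with pairs -/

/-- Terms of System F with pairs. -/
inductive FTm : Type
  | var : ℕ → FTm
  | lam : FTm → FTm
  | app : FTm → FTm → FTm
  | star : FTm
  | pair : FTm → FTm → FTm
  | pl : FTm → FTm
  | pr : FTm → FTm
  deriving DecidableEq

/-- Types of System F with pairs. -/
inductive FTy : Type
  | var : ℕ → FTy
  | arrow : FTy → FTy → FTy
  | all : FTy → FTy
  | one : FTy
  | prod : FTy → FTy → FTy
  deriving DecidableEq

/-- Shifting of term variables in F-terms. -/
def FTm.shift (d c : ℕ) : FTm → FTm
  | .var n => if n < c then .var n else .var (n + d)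
  | .lam t => .lam (FTm.shift d (c + 1) t)
  | .app t u => .app (FTm.shift d c t) (FTm.shift d c u)
  | .star => .star
  | .pair t u => .pair (FTm.shift d c t) (FTm.shift d c u)
  | .pl t => .pl (FTm.shift d c t)
  | .pr t => .pr (FTm.shift d c t)

/-- Substitution of the term variable `k` by `v` in an F-term. -/
def FTm.subst (k : ℕ) (v : FTm) : FTm → FTm
  | .var n => if n = k then FTm.shift k 0 v else if k < n then .var (n - 1) else .var n
  | .lam t => .lam (FTm.subst (k + 1) v t)
  | .app t u => .app (FTm.subst k v t) (FTm.subst k v u)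
  | .star => .star
  | .pair t u => .pair (FTm.subst k v t) (FTm.subst k v u)
  | .pl t => .pl (FTm.subst k v t)
  | .pr t => .pr (FTm.subst k v t)

/-- Shifting of type variables in F-types. -/
def FTy.shift (d c : ℕ) : FTy → FTy
  | .var n => if n < c then .var n else .var (n + d)
  | .arrow A B => .arrow (FTy.shift d c A) (FTy.shift d c B)
  | .all A => .all (FTy.shift d (c + 1) A)
  | .one => .one
  | .prod A B => .prod (FTy.shift d c A) (FTy.shift d c B)

/-- Substitution of the type variable `k` by `B` in an F-type. -/
def FTy.subst (k : ℕ) (B : FTy) : FTy → FTy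
  | .var n => if n = k then FTy.shift k 0 B else if k < n then .var (n - 1) else .var n
  | .arrow A A' => .arrow (FTy.subst k B A) (FTy.subst k B A')
  | .all A => .all (FTy.subst (k + 1) B A)
  | .one => .one
  | .prod A A' => .prod (FTy.subst k B A) (FTy.subst k B A')

/-- One-step reduction in System F with pairs. -/
inductive FStep : FTm → FTm → Prop
  | beta (t u : FTm) : FStep (.app (.lam t) u) (FTm.subst 0 u t)
  | plPair (t u : FTm) : FStep (.pl (.pair t u)) t
  | prPair (t u : FTm) : FStep (.pr (.pair t u)) u
  | eta (t : FTm) : FStep (.lam (.app (FTm.shift 1 0 t) (.var 0))) t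
  | sp (p : FTm) : FStep (.pair (.pl p) (.pr p)) p
  | lamCongr : FStep t t' → FStep (.lam t) (.lam t')
  | appLeft : FStep t t' → FStep (.app t u) (.app t' u)
  | appRight : FStep u u' → FStep (.app t u) (.app t u')
  | pairLeft : FStep t t' → FStep (.pair t u) (.pair t' u)
  | pairRight : FStep u u' → FStep (.pair t u) (.pair t u')
  | plCongr : FStep t t' → FStep (.pl t) (.pl t')
  | prCongr : FStep t t' → FStep (.pr t) (.pr t')

/-- Typing in System F with pairs. -/
inductive FTyping : List FTy → FTm → FTy → Prop
  | ax {Γ n A} : Γ[n]? = some A → FTyping Γ (.var n) A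
  | star {Γ} : FTyping Γ .star .one
  | lam {Γ A t B} : FTyping (A :: Γ) t B → FTyping Γ (.lam t) (.arrow A B)
  | app {Γ t u A B} : FTyping Γ t (.arrow A B) → FTyping Γ u A → FTyping Γ (.app t u) B
  | pair {Γ t u A B} : FTyping Γ t A → FTyping Γ u B → FTyping Γ (.pair t u) (.prod A B)
  | pl {Γ t A B} : FTyping Γ t (.prod A B) → FTyping Γ (.pl t) A
  | pr {Γ t A B} : FTyping Γ t (.prod A B) → FTyping Γ (.pr t) B
  | allI {Γ t A} : FTyping (Γ.map (FTy.shift 1 0)) t A → FTyping Γ t (.all A)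
  | allE {Γ t A} (B : FTy) : FTyping Γ t (.all A) → FTyping Γ t (FTy.subst 0 B A)

/-! ## The translation from Add_struct into System F with pairs -/

mutual
  /-- Translation of unit types into F-types. -/
  def transU : UTy → FTy
    | .var n => .var n
    | .arrow U T => .arrow (transU U) (transT T)
    | .all U => .all (transU U)

  /-- Translation of Add types into F-types. -/
  def transT : Ty → FTy
    | .unit U => transU U
    | .add T R => .prod (transT T) (transT R)
    | .zero => .one
end

/-- Labelling of the `ℓ`-leaves of a tree by F-terms (pairs at the nodes, `⋆`
at the `𝟘`-leaves), yielding an F-term. -/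
def ATree.labelF : ATree → (List Bool → FTm) → FTm
  | .leaf, f => f []
  | .zleaf, _ => .star
  | .node A B, f => .pair (ATree.labelF A fun w => f (false :: w))
      (ATree.labelF B fun w => f (true :: w))

/-- `π_{w̄}(t)`: the composite of projections along the mirror of the word `w`. -/
def projMirror (w : List Bool) (t : FTm) : FTm :=
  w.foldl (fun s b => if b then .pr s else .pl s) t

/-- The translation `|t|_D` of a term typed in Add_struct by a derivation `D`
into an F-term. -/
def transD : ∀ {Γ : List UTy} {t : Tm} {T : Ty}, SDeriv Γ t T → FTm
  | _, _, _, .ax _ n _ _ => .var n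
  | _, _, _, .axZero _ => .star
  | _, _, _, .arrI D => .lam (transD D)
  | _, _, _, .addI D₁ D₂ => .pair (transD D₁) (transD D₂)
  | _, _, _, .allE _ D => transD D
  | _, _, _, .allI D => transD D
  | _, _, _, .arrE A A' _ _ _ _ _ D₁ D₂ =>
      (A.comp A').labelF fun p =>
        .app (projMirror (A.split p).1 (transD D₁)) (projMirror (A.split p).2 (transD D₂))

/-! ## Structural reduction (without AC and without the rule `t+𝟎 → t`) -/

/-- One-step reduction by a rule other than `t+𝟎 → t` (and not using the
AC-equivalence, which is absent from Add_struct). -/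
inductive SStep : Tm → Tm → Prop
  | distrRight (t u s : Tm) : SStep (.app (.add t u) s) (.add (.app t s) (.app u s))
  | distrLeft (t u s : Tm) : SStep (.app t (.add u s)) (.add (.app t u) (.app t s))
  | zeroApp (t : Tm) : SStep (.app .zero t) .zero
  | appZero (t : Tm) : SStep (.app t .zero) .zero
  | beta (t v : Tm) : IsValue v → SStep (.app (.lam t) v) (Tm.subst 0 v t)
  | appLeft : SStep t t' → SStep (.app t u) (.app t' u)
  | appRight : SStep u u' → SStep (.app t u) (.app t u')
  | addLeft : SStep t t' → SStep (.add t u) (.add t' u)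
  | addRight : SStep u u' → SStep (.add t u) (.add t u')
  | lamCongr : SStep t t' → SStep (.lam t) (.lam t')

/-! ## The partial inverse translation -/

/-- Partial inverse translation on types. -/
def invTy : FTy → Option Ty
  | .var n => some (.unit (.var n))
  | .one => some .zero
  | .all A =>
    match invTy A with
    | some (.unit U) => some (.unit (.all U))
    | _ => none
  | .prod A B =>
    match invTy A, invTy B with
    | some T, some R => some (.add T R)
    | _, _ => none
  | .arrow A B =>
    match invTy A, invTy B with
    | some (.unit U), some T => some (.unit (.arrow U T))
    | _, _ => none

/-- An F-term of the shape `A[wv ↦ π_{w̄}(t) π_{v̄}(u)]` for a non-trivial tree. -/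
def IsTreeApp (s : FTm) : Prop :=
  ∃ (A A' : ATree) (t u : FTm), A.comp A' ≠ .leaf ∧ A.comp A' ≠ .zleaf ∧
    s = (A.comp A').labelF fun p =>
      .app (projMirror (A.split p).1 t) (projMirror (A.split p).2 u)

/-- The partial inverse translation on F-terms, as a relation. -/
inductive InvTm : FTm → Tm → Prop
  | var (n : ℕ) : InvTm (.var n) (.var n)
  | star : InvTm .star .zero
  | lam : InvTm t t' → InvTm (.lam t) (.lam t')
  | app : InvTm t t' → InvTm u u' → InvTm (.app t u) (.app t' u')
  | treeApp (A A' : ATree) {t u : FTm} {t' u' : Tm} :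
      A.comp A' ≠ .leaf → A.comp A' ≠ .zleaf → InvTm t t' → InvTm u u' →
      InvTm ((A.comp A').labelF fun p =>
          .app (projMirror (A.split p).1 t) (projMirror (A.split p).2 u))
        (.app t' u')
  | pair : ¬ IsTreeApp (.pair t u) → InvTm t t' → InvTm u u' →
      InvTm (.pair t u) (.add t' u')

/-! ### Structural lemmas on type shifting/substitution -/

mutual
theorem UTy.shift_zero : ∀ (c : ℕ) (A : UTy), UTy.shift 0 c A = A
  | c, .var n => by simp [UTy.shift]
  | c, .arrow U T => by simp [UTy.shift, UTy.shift_zero, Ty.shift_zero]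
  | c, .all U => by simp [UTy.shift, UTy.shift_zero]
theorem Ty.shift_zero : ∀ (c : ℕ) (A : Ty), Ty.shift 0 c A = A
  | c, .unit U => by simp [Ty.shift, UTy.shift_zero]
  | c, .add T R => by simp [Ty.shift, Ty.shift_zero]
  | c, .zero => by simp [Ty.shift]
end

mutual
theorem UTy.shift_shift_add : ∀ (A : UTy) (d k b c' : ℕ), b ≤ c' → c' ≤ b + k →
    UTy.shift d c' (UTy.shift k b A) = UTy.shift (k + d) b A
  | .var n, d, k, b, c', h1, h2 => by
      simp only [UTy.shift]; split_ifs with h3 <;> simp only [UTy.shift] <;>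
        split_ifs <;> (first | rfl | (exfalso; omega) | (congr 1; omega))
  | .arrow U T, d, k, b, c', h1, h2 => by
      simp only [UTy.shift]
      rw [UTy.shift_shift_add U d k b c' h1 h2, Ty.shift_shift_add T d k b c' h1 h2]
  | .all U, d, k, b, c', h1, h2 => by
      simp only [UTy.shift]
      rw [UTy.shift_shift_add U d k (b+1) (c'+1) (by omega) (by omega)]
theorem Ty.shift_shift_add : ∀ (A : Ty) (d k b c' : ℕ), b ≤ c' → c' ≤ b + k →
    Ty.shift d c' (Ty.shift k b A) = Ty.shift (k + d) b A
  | .unit U, d, k, b, c', h1, h2 => by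
      simp only [Ty.shift]; rw [UTy.shift_shift_add U d k b c' h1 h2]
  | .add T R, d, k, b, c', h1, h2 => by
      simp only [Ty.shift]
      rw [Ty.shift_shift_add T d k b c' h1 h2, Ty.shift_shift_add R d k b c' h1 h2]
  | .zero, _, _, _, _, _, _ => rfl
end

mutual
theorem UTy.shift_shift_comm : ∀ (A : UTy) (d d' c c' : ℕ), c ≤ c' →
    UTy.shift d' (c' + d) (UTy.shift d c A) = UTy.shift d c (UTy.shift d' c' A)
  | .var n, d, d', c, c', h => by
      simp only [UTy.shift]; split_ifs <;> simp only [UTy.shift] <;>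
        split_ifs <;> (first | rfl | (exfalso; omega) | (congr 1; omega))
  | .arrow U T, d, d', c, c', h => by
      simp only [UTy.shift]
      rw [UTy.shift_shift_comm U d d' c c' h, Ty.shift_shift_comm T d d' c c' h]
  | .all U, d, d', c, c', h => by
      simp only [UTy.shift]
      have := UTy.shift_shift_comm U d d' (c+1) (c'+1) (by omega)
      rw [show c' + 1 + d = c' + d + 1 by omega] at this
      rw [this]
theorem Ty.shift_shift_comm : ∀ (A : Ty) (d d' c c' : ℕ), c ≤ c' →
    Ty.shift d' (c' + d) (Ty.shift d c A) = Ty.shift d c (Ty.shift d' c' A)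
  | .unit U, d, d', c, c', h => by
      simp only [Ty.shift]; rw [UTy.shift_shift_comm U d d' c c' h]
  | .add T R, d, d', c, c', h => by
      simp only [Ty.shift]
      rw [Ty.shift_shift_comm T d d' c c' h, Ty.shift_shift_comm R d d' c c' h]
  | .zero, _, _, _, _, _ => rfl
end

mutual
theorem UTy.subst_shift_cancel : ∀ (A : UTy) (W : UTy) (k c d : ℕ), c ≤ k → k ≤ c + d →
    UTy.subst k W (UTy.shift (d + 1) c A) = UTy.shift d c A
  | .var n, W, k, c, d, h1, h2 => by
      simp only [UTy.shift]; split_ifs <;> simp only [UTy.subst] <;>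
        split_ifs <;> (first | rfl | (exfalso; omega) | (congr 1; omega))
  | .arrow U T, W, k, c, d, h1, h2 => by
      simp only [UTy.shift, UTy.subst]
      rw [UTy.subst_shift_cancel U W k c d h1 h2, Ty.subst_shift_cancel T W k c d h1 h2]
  | .all U, W, k, c, d, h1, h2 => by
      simp only [UTy.shift, UTy.subst]
      rw [UTy.subst_shift_cancel U W (k+1) (c+1) d (by omega) (by omega)]
theorem Ty.subst_shift_cancel : ∀ (A : Ty) (W : UTy) (k c d : ℕ), c ≤ k → k ≤ c + d →
    Ty.subst k W (Ty.shift (d + 1) c A) = Ty.shift d c A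
  | .unit U, W, k, c, d, h1, h2 => by
      simp only [Ty.shift, Ty.subst]; rw [UTy.subst_shift_cancel U W k c d h1 h2]
  | .add T R, W, k, c, d, h1, h2 => by
      simp only [Ty.shift, Ty.subst]
      rw [Ty.subst_shift_cancel T W k c d h1 h2, Ty.subst_shift_cancel R W k c d h1 h2]
  | .zero, _, _, _, _, _, _ => rfl
end

mutual
theorem UTy.shift_subst : ∀ (A V : UTy) (d k j : ℕ),
    UTy.shift d (k + j) (UTy.subst k V A)
      = UTy.subst k (UTy.shift d j V) (UTy.shift d (k + j + 1) A)
  | .var n, V, d, k, j => by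
      by_cases h1 : n = k
      · have e1 : UTy.subst k V (UTy.var n) = UTy.shift k 0 V := by
          simp only [UTy.subst]; rw [if_pos h1]
        have e2 : UTy.shift d (k + j + 1) (UTy.var n) = UTy.var n := by
          simp only [UTy.shift]; rw [if_pos (by omega)]
        have e3 : UTy.subst k (UTy.shift d j V) (UTy.var n) = UTy.shift k 0 (UTy.shift d j V) := by
          simp only [UTy.subst]; rw [if_pos h1]
        rw [e1, e2, e3]
        have := UTy.shift_shift_comm V k d 0 j (by omega)
        rw [show j + k = k + j by omega] at this
        exact this
      · by_cases h2 : k < n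
        · have e1 : UTy.subst k V (UTy.var n) = UTy.var (n - 1) := by
            simp only [UTy.subst]; rw [if_neg h1, if_pos h2]
          rw [e1]
          by_cases h3 : n < k + j + 1
          · have e2 : UTy.shift d (k + j + 1) (UTy.var n) = UTy.var n := by
              simp only [UTy.shift]; rw [if_pos h3]
            rw [e2]
            simp only [UTy.shift, UTy.subst]
            rw [if_pos (by omega), if_neg h1, if_pos h2]
          · have e2 : UTy.shift d (k + j + 1) (UTy.var n) = UTy.var (n + d) := by
              simp only [UTy.shift]; rw [if_neg h3]
            rw [e2]
            simp only [UTy.shift, UTy.subst]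
            rw [if_neg (by omega), if_neg (by omega), if_pos (by omega)]
            congr 1; omega
        · have e1 : UTy.subst k V (UTy.var n) = UTy.var n := by
            simp only [UTy.subst]; rw [if_neg h1, if_neg h2]
          have e2 : UTy.shift d (k + j + 1) (UTy.var n) = UTy.var n := by
            simp only [UTy.shift]; rw [if_pos (by omega)]
          rw [e1, e2]
          simp only [UTy.shift, UTy.subst]
          rw [if_pos (by omega), if_neg h1, if_neg h2]
  | .arrow U T, V, d, k, j => by
      simp only [UTy.subst, UTy.shift]
      rw [UTy.shift_subst U V d k j, Ty.shift_subst T V d k j]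
  | .all U, V, d, k, j => by
      simp only [UTy.subst, UTy.shift]
      have := UTy.shift_subst U V d (k+1) j
      rw [show k + 1 + j = k + j + 1 by omega] at this
      rw [this]
theorem Ty.shift_subst : ∀ (A : Ty) (V : UTy) (d k j : ℕ),
    Ty.shift d (k + j) (Ty.subst k V A)
      = Ty.subst k (UTy.shift d j V) (Ty.shift d (k + j + 1) A)
  | .unit U, V, d, k, j => by
      simp only [Ty.subst, Ty.shift]; rw [UTy.shift_subst U V d k j]
  | .add T R, V, d, k, j => by
      simp only [Ty.subst, Ty.shift]
      rw [Ty.shift_subst T V d k j, Ty.shift_subst R V d k j]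
  | .zero, _, _, _, _ => rfl
end

mutual
theorem UTy.shift_replAux : ∀ (A : UTy) (d c' c X : ℕ) (U : UTy), c' ≤ c →
    UTy.shift d c' (UTy.replAux X U c A) = UTy.replAux X U (c + d) (UTy.shift d c' A)
  | .var n, d, c', c, X, U, h => by
      by_cases h1 : n = X + c
      · have e1 : UTy.replAux X U c (UTy.var n) = UTy.shift c 0 U := by
          simp only [UTy.replAux]; rw [if_pos h1]
        have e2 : UTy.shift d c' (UTy.var n) = UTy.var (n + d) := by
          simp only [UTy.shift]; rw [if_neg (by omega)]
        rw [e1, e2]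
        have e3 : UTy.replAux X U (c + d) (UTy.var (n + d)) = UTy.shift (c + d) 0 U := by
          simp only [UTy.replAux]; rw [if_pos (by omega)]
        rw [e3]
        exact UTy.shift_shift_add U d c 0 c' (by omega) (by omega)
      · have e1 : UTy.replAux X U c (UTy.var n) = UTy.var n := by
          simp only [UTy.replAux]; rw [if_neg h1]
        rw [e1]
        by_cases h2 : n < c'
        · have e2 : UTy.shift d c' (UTy.var n) = UTy.var n := by
            simp only [UTy.shift]; rw [if_pos h2]
          rw [e2]
          simp only [UTy.replAux]; rw [if_neg (by omega)]
        · have e2 : UTy.shift d c' (UTy.var n) = UTy.var (n + d) := by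
            simp only [UTy.shift]; rw [if_neg h2]
          rw [e2]
          simp only [UTy.replAux]; rw [if_neg (by omega)]
  | .arrow U' T, d, c', c, X, U, h => by
      simp only [UTy.replAux, UTy.shift]
      rw [UTy.shift_replAux U' d c' c X U h, Ty.shift_replAux T d c' c X U h]
  | .all U', d, c', c, X, U, h => by
      simp only [UTy.replAux, UTy.shift]
      have := UTy.shift_replAux U' d (c'+1) (c+1) X U (by omega)
      rw [show c + 1 + d = c + d + 1 by omega] at this
      rw [this]
theorem Ty.shift_replAux : ∀ (A : Ty) (d c' c X : ℕ) (U : UTy), c' ≤ c →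
    Ty.shift d c' (Ty.replAux X U c A) = Ty.replAux X U (c + d) (Ty.shift d c' A)
  | .unit U', d, c', c, X, U, h => by
      simp only [Ty.replAux, Ty.shift]; rw [UTy.shift_replAux U' d c' c X U h]
  | .add T R, d, c', c, X, U, h => by
      simp only [Ty.replAux, Ty.shift]
      rw [Ty.shift_replAux T d c' c X U h, Ty.shift_replAux R d c' c X U h]
  | .zero, _, _, _, _, _, _ => rfl
end

mutual
theorem UTy.replAux_subst : ∀ (A V : UTy) (k j X : ℕ) (U : UTy),
    UTy.replAux X U (k + j) (UTy.subst k V A)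
      = UTy.subst k (UTy.replAux X U j V) (UTy.replAux X U (k + j + 1) A)
  | .var n, V, k, j, X, U => by
      by_cases h1 : n = k
      · have e1 : UTy.subst k V (UTy.var n) = UTy.shift k 0 V := by
          simp only [UTy.subst]; rw [if_pos h1]
        have e2 : UTy.replAux X U (k + j + 1) (UTy.var n) = UTy.var n := by
          simp only [UTy.replAux]; rw [if_neg (by omega)]
        have e3 : UTy.subst k (UTy.replAux X U j V) (UTy.var n)
            = UTy.shift k 0 (UTy.replAux X U j V) := by
          simp only [UTy.subst]; rw [if_pos h1]
        rw [e1, e2, e3]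
        have := UTy.shift_replAux V k 0 j X U (by omega)
        rw [show j + k = k + j by omega] at this
        exact this.symm
      · by_cases h2 : k < n
        · have e1 : UTy.subst k V (UTy.var n) = UTy.var (n - 1) := by
            simp only [UTy.subst]; rw [if_neg h1, if_pos h2]
          rw [e1]
          by_cases h3 : n = X + (k + j) + 1
          · have e2 : UTy.replAux X U (k + j) (UTy.var (n - 1)) = UTy.shift (k + j) 0 U := by
              simp only [UTy.replAux]; rw [if_pos (by omega)]
            have e3 : UTy.replAux X U (k + j + 1) (UTy.var n) = UTy.shift (k + j + 1) 0 U := by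
              simp only [UTy.replAux]; rw [if_pos (by omega)]
            rw [e2, e3]
            rw [UTy.subst_shift_cancel U _ k 0 (k + j) (by omega) (by omega)]
          · have e2 : UTy.replAux X U (k + j) (UTy.var (n - 1)) = UTy.var (n - 1) := by
              simp only [UTy.replAux]; rw [if_neg (by omega)]
            have e3 : UTy.replAux X U (k + j + 1) (UTy.var n) = UTy.var n := by
              simp only [UTy.replAux]; rw [if_neg (by omega)]
            rw [e2, e3]
            simp only [UTy.subst]; rw [if_neg h1, if_pos h2]
        · have e1 : UTy.subst k V (UTy.var n) = UTy.var n := by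
            simp only [UTy.subst]; rw [if_neg h1, if_neg h2]
          have e2 : UTy.replAux X U (k + j) (UTy.var n) = UTy.var n := by
            simp only [UTy.replAux]; rw [if_neg (by omega)]
          have e3 : UTy.replAux X U (k + j + 1) (UTy.var n) = UTy.var n := by
            simp only [UTy.replAux]; rw [if_neg (by omega)]
          rw [e1, e2, e3]
          simp only [UTy.subst]; rw [if_neg h1, if_neg h2]
  | .arrow U' T, V, k, j, X, U => by
      simp only [UTy.subst, UTy.replAux]
      rw [UTy.replAux_subst U' V k j X U, Ty.replAux_subst T V k j X U]
  | .all U', V, k, j, X, U => by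
      simp only [UTy.subst, UTy.replAux]
      have := UTy.replAux_subst U' V (k+1) j X U
      rw [show k + 1 + j = k + j + 1 by omega] at this
      rw [this]
theorem Ty.replAux_subst : ∀ (A : Ty) (V : UTy) (k j X : ℕ) (U : UTy),
    Ty.replAux X U (k + j) (Ty.subst k V A)
      = Ty.subst k (UTy.replAux X U j V) (Ty.replAux X U (k + j + 1) A)
  | .unit U', V, k, j, X, U => by
      simp only [Ty.subst, Ty.replAux]; rw [UTy.replAux_subst U' V k j X U]
  | .add T R, V, k, j, X, U => by
      simp only [Ty.subst, Ty.replAux]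
      rw [Ty.replAux_subst T V k j X U, Ty.replAux_subst R V k j X U]
  | .zero, _, _, _, _, _ => rfl
end
/-! ### Congruence of type equivalence under shifting and replacement -/

theorem UEq.replAux_congr {U V : UTy} (h : UEq U V) (X c : ℕ) (W : UTy) :
    UEq (UTy.replAux X W c U) (UTy.replAux X W c V) :=
  UEq.rec (motive_1 := fun U V _ => ∀ c, UEq (UTy.replAux X W c U) (UTy.replAux X W c V))
    (motive_2 := fun T R _ => ∀ c, TEq (Ty.replAux X W c T) (Ty.replAux X W c R))
    (fun _ _ => .refl _)
    (fun _ ih c => .symm (ih c))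
    (fun _ _ ih1 ih2 c => .trans (ih1 c) (ih2 c))
    (fun _ _ ih1 ih2 c => .arrow (ih1 c) (ih2 c))
    (fun _ ih c => .all (ih (c+1)))
    (fun _ _ => .refl _)
    (fun _ ih c => .symm (ih c))
    (fun _ _ ih1 ih2 c => .trans (ih1 c) (ih2 c))
    (fun _ ih c => .unit (ih c))
    (fun _ _ ih1 ih2 c => .addCongr (ih1 c) (ih2 c))
    (fun _ _ _ => .comm _ _)
    (fun _ _ _ _ => .assoc _ _ _)
    (fun _ _ => .zero _)
    h c

theorem TEq.replAux_congr {T R : Ty} (h : TEq T R) (X c : ℕ) (W : UTy) :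
    TEq (Ty.replAux X W c T) (Ty.replAux X W c R) :=
  TEq.rec (motive_1 := fun U V _ => ∀ c, UEq (UTy.replAux X W c U) (UTy.replAux X W c V))
    (motive_2 := fun T R _ => ∀ c, TEq (Ty.replAux X W c T) (Ty.replAux X W c R))
    (fun _ _ => .refl _)
    (fun _ ih c => .symm (ih c))
    (fun _ _ ih1 ih2 c => .trans (ih1 c) (ih2 c))
    (fun _ _ ih1 ih2 c => .arrow (ih1 c) (ih2 c))
    (fun _ ih c => .all (ih (c+1)))
    (fun _ _ => .refl _)
    (fun _ ih c => .symm (ih c))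
    (fun _ _ ih1 ih2 c => .trans (ih1 c) (ih2 c))
    (fun _ ih c => .unit (ih c))
    (fun _ _ ih1 ih2 c => .addCongr (ih1 c) (ih2 c))
    (fun _ _ _ => .comm _ _)
    (fun _ _ _ _ => .assoc _ _ _)
    (fun _ _ => .zero _)
    h c

theorem UEq.shift_congr {U V : UTy} (h : UEq U V) (d c : ℕ) :
    UEq (UTy.shift d c U) (UTy.shift d c V) :=
  UEq.rec (motive_1 := fun U V _ => ∀ c, UEq (UTy.shift d c U) (UTy.shift d c V))
    (motive_2 := fun T R _ => ∀ c, TEq (Ty.shift d c T) (Ty.shift d c R))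
    (fun _ _ => .refl _)
    (fun _ ih c => .symm (ih c))
    (fun _ _ ih1 ih2 c => .trans (ih1 c) (ih2 c))
    (fun _ _ ih1 ih2 c => .arrow (ih1 c) (ih2 c))
    (fun _ ih c => .all (ih (c+1)))
    (fun _ _ => .refl _)
    (fun _ ih c => .symm (ih c))
    (fun _ _ ih1 ih2 c => .trans (ih1 c) (ih2 c))
    (fun _ ih c => .unit (ih c))
    (fun _ _ ih1 ih2 c => .addCongr (ih1 c) (ih2 c))
    (fun _ _ _ => .comm _ _)
    (fun _ _ _ _ => .assoc _ _ _)
    (fun _ _ => .zero _)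
    h c

theorem TEq.shift_congr {T R : Ty} (h : TEq T R) (d c : ℕ) :
    TEq (Ty.shift d c T) (Ty.shift d c R) :=
  TEq.rec (motive_1 := fun U V _ => ∀ c, UEq (UTy.shift d c U) (UTy.shift d c V))
    (motive_2 := fun T R _ => ∀ c, TEq (Ty.shift d c T) (Ty.shift d c R))
    (fun _ _ => .refl _)
    (fun _ ih c => .symm (ih c))
    (fun _ _ ih1 ih2 c => .trans (ih1 c) (ih2 c))
    (fun _ _ ih1 ih2 c => .arrow (ih1 c) (ih2 c))
    (fun _ ih c => .all (ih (c+1)))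
    (fun _ _ => .refl _)
    (fun _ ih c => .symm (ih c))
    (fun _ _ ih1 ih2 c => .trans (ih1 c) (ih2 c))
    (fun _ ih c => .unit (ih c))
    (fun _ _ ih1 ih2 c => .addCongr (ih1 c) (ih2 c))
    (fun _ _ _ => .comm _ _)
    (fun _ _ _ _ => .assoc _ _ _)
    (fun _ _ => .zero _)
    h c

/-! ### allN, msubst, sumT lemmas -/

theorem UTy.replAux_allN : ∀ (k : ℕ) (W : UTy) (X : ℕ) (U : UTy) (c : ℕ),
    UTy.replAux X U c (allN k W) = allN k (UTy.replAux X U (c + k) W)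
  | 0, W, X, U, c => by simp [allN]
  | k+1, W, X, U, c => by
      simp only [allN, UTy.replAux]
      rw [UTy.replAux_allN k W X U (c+1), show c + 1 + k = c + (k + 1) by omega]

theorem UTy.shift_allN : ∀ (k : ℕ) (W : UTy) (d c : ℕ),
    UTy.shift d c (allN k W) = allN k (UTy.shift d (c + k) W)
  | 0, W, d, c => by simp [allN]
  | k+1, W, d, c => by
      simp only [allN, UTy.shift]
      rw [UTy.shift_allN k W d (c+1), show c + 1 + k = c + (k + 1) by omega]

/-- Pointwise replacement in a list of unit types, at staggered levels. -/
def replList (X : ℕ) (U : UTy) (c : ℕ) : List UTy → List UTy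
  | [] => []
  | V :: Vs => UTy.replAux X U (c + Vs.length) V :: replList X U c Vs

@[simp] theorem replList_length (X : ℕ) (U : UTy) (c : ℕ) :
    ∀ Vs : List UTy, (replList X U c Vs).length = Vs.length
  | [] => rfl
  | V :: Vs => by simp [replList, replList_length]

/-- Pointwise shifting in a list of unit types, at staggered levels. -/
def shiftList (d c : ℕ) : List UTy → List UTy
  | [] => []
  | V :: Vs => UTy.shift d (c + Vs.length) V :: shiftList d c Vs

@[simp] theorem shiftList_length (d c : ℕ) :
    ∀ Vs : List UTy, (shiftList d c Vs).length = Vs.length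
  | [] => rfl
  | V :: Vs => by simp [shiftList, shiftList_length]

theorem UTy.msubst_cons (V : UTy) (Vs : List UTy) (W : UTy) :
    UTy.msubst (V :: Vs) W = UTy.msubst Vs (UTy.subst 0 V W) := rfl

theorem Ty.msubst_cons (V : UTy) (Vs : List UTy) (W : Ty) :
    Ty.msubst (V :: Vs) W = Ty.msubst Vs (Ty.subst 0 V W) := rfl

theorem UTy.replAux_msubst : ∀ (Vs : List UTy) (W : UTy) (X : ℕ) (U : UTy) (c : ℕ),
    UTy.replAux X U c (UTy.msubst Vs W)
      = UTy.msubst (replList X U c Vs) (UTy.replAux X U (c + Vs.length) W)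
  | [], W, X, U, c => by simp [UTy.msubst, replList]
  | V :: Vs, W, X, U, c => by
      rw [UTy.msubst_cons, UTy.replAux_msubst Vs _ X U c]
      have h := UTy.replAux_subst W V 0 (c + Vs.length) X U
      simp only [Nat.zero_add] at h
      rw [h]
      simp only [replList, UTy.msubst_cons, List.length_cons]
      rw [show c + (Vs.length + 1) = c + Vs.length + 1 by omega]

theorem Ty.replAux_msubst : ∀ (Vs : List UTy) (W : Ty) (X : ℕ) (U : UTy) (c : ℕ),
    Ty.replAux X U c (Ty.msubst Vs W)
      = Ty.msubst (replList X U c Vs) (Ty.replAux X U (c + Vs.length) W)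
  | [], W, X, U, c => by simp [Ty.msubst, replList]
  | V :: Vs, W, X, U, c => by
      rw [Ty.msubst_cons, Ty.replAux_msubst Vs _ X U c]
      have h := Ty.replAux_subst W V 0 (c + Vs.length) X U
      simp only [Nat.zero_add] at h
      rw [h]
      simp only [replList, Ty.msubst_cons, List.length_cons]
      rw [show c + (Vs.length + 1) = c + Vs.length + 1 by omega]

theorem UTy.shift_msubst : ∀ (Vs : List UTy) (W : UTy) (d c : ℕ),
    UTy.shift d c (UTy.msubst Vs W)
      = UTy.msubst (shiftList d c Vs) (UTy.shift d (c + Vs.length) W)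
  | [], W, d, c => by simp [UTy.msubst, shiftList]
  | V :: Vs, W, d, c => by
      rw [UTy.msubst_cons, UTy.shift_msubst Vs _ d c]
      have h := UTy.shift_subst W V d 0 (c + Vs.length)
      simp only [Nat.zero_add] at h
      rw [h]
      simp only [shiftList, UTy.msubst_cons, List.length_cons]
      rw [show c + (Vs.length + 1) = c + Vs.length + 1 by omega]

theorem Ty.shift_msubst : ∀ (Vs : List UTy) (W : Ty) (d c : ℕ),
    Ty.shift d c (Ty.msubst Vs W)
      = Ty.msubst (shiftList d c Vs) (Ty.shift d (c + Vs.length) W)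
  | [], W, d, c => by simp [Ty.msubst, shiftList]
  | V :: Vs, W, d, c => by
      rw [Ty.msubst_cons, Ty.shift_msubst Vs _ d c]
      have h := Ty.shift_subst W V d 0 (c + Vs.length)
      simp only [Nat.zero_add] at h
      rw [h]
      simp only [shiftList, Ty.msubst_cons, List.length_cons]
      rw [show c + (Vs.length + 1) = c + Vs.length + 1 by omega]

theorem sumT_hom (f : Ty → Ty) (hadd : ∀ a b, f (.add a b) = .add (f a) (f b))
    (hz : f .zero = .zero) (l : List Ty) : f (sumT l) = sumT (l.map f) := by
  suffices h : ∀ (l : List Ty) (acc : Ty),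
      f (List.foldl Ty.add acc l) = List.foldl Ty.add (f acc) (l.map f) by
    simpa [sumT, hz] using h l .zero
  intro l
  induction l with
  | nil => intro acc; rfl
  | cons a l ih => intro acc; simp only [List.foldl, List.map]; rw [ih, hadd]
/-! ### Typing is preserved by type-variable replacement and shifting -/

theorem liftCtx_map_replAux (Γ : List UTy) (X c : ℕ) (U : UTy) :
    (liftCtx Γ).map (UTy.replAux X U (c+1)) = liftCtx (Γ.map (UTy.replAux X U c)) := by
  simp only [liftCtx, List.map_map]
  apply List.map_congr_left
  intro A _
  simp only [Function.comp]
  exact (UTy.shift_replAux A 1 0 c X U (by omega)).symm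

theorem liftCtx_map_shift (Γ : List UTy) (d c : ℕ) :
    (liftCtx Γ).map (UTy.shift d (c+1)) = liftCtx (Γ.map (UTy.shift d c)) := by
  simp only [liftCtx, List.map_map]
  apply List.map_congr_left
  intro A _
  simp only [Function.comp]
  have := UTy.shift_shift_comm A 1 d 0 c (by omega)
  simpa using this

theorem Typing.replAux_typed {Γ : List UTy} {t : Tm} {T : Ty} (h : Typing Γ t T)
    (X : ℕ) (U : UTy) :
    ∀ c, Typing (Γ.map (UTy.replAux X U c)) t (Ty.replAux X U c T) := by
  induction h with
  | @ax Γ n U0 hn =>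
      intro c
      exact Typing.ax (by simp [List.getElem?_map, hn])
  | axZero => intro c; exact Typing.axZero
  | equiv h heq ih => intro c; exact (ih c).equiv (heq.replAux_congr X c U)
  | arrI h ih => intro c; exact Typing.arrI (ih c)
  | addI h1 h2 ih1 ih2 => intro c; exact Typing.addI (ih1 c) (ih2 c)
  | @allE Γ t U0 V h ih =>
      intro c
      have h2 := Typing.allE (UTy.replAux X U c V) (ih c)
      have e := UTy.replAux_subst U0 V 0 c X U
      simp only [Nat.zero_add] at e
      show Typing _ t (.unit (UTy.replAux X U c (UTy.subst 0 V U0)))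
      rw [e]
      exact h2
  | allI h ih =>
      intro c
      have h2 := ih (c+1)
      rw [liftCtx_map_replAux] at h2
      exact Typing.allI h2
  | @arrE Γ t u k U0 Ts Vs hTs hVs hlen h1 h2 ih1 ih2 =>
      intro c
      have e1 : Ty.replAux X U c (sumT (Ts.map fun Ti => .unit (allN k (.arrow U0 Ti))))
          = sumT ((Ts.map (Ty.replAux X U (c+k))).map
              fun Ti => .unit (allN k (.arrow (UTy.replAux X U (c+k) U0) Ti))) := by
        rw [sumT_hom (Ty.replAux X U c) (fun _ _ => rfl) rfl, List.map_map, List.map_map]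
        apply congrArg sumT
        apply List.map_congr_left
        intro Ti _
        show Ty.replAux X U c (.unit (allN k (.arrow U0 Ti)))
          = .unit (allN k (.arrow (UTy.replAux X U (c+k) U0) (Ty.replAux X U (c+k) Ti)))
        show Ty.unit (UTy.replAux X U c (allN k (.arrow U0 Ti))) = _
        rw [UTy.replAux_allN]
        rfl
      have e2 : Ty.replAux X U c (sumT (Vs.map fun Vj => .unit (UTy.msubst Vj U0)))
          = sumT ((Vs.map (replList X U c)).map
              fun Vj => .unit (UTy.msubst Vj (UTy.replAux X U (c+k) U0))) := by
        rw [sumT_hom (Ty.replAux X U c) (fun _ _ => rfl) rfl, List.map_map, List.map_map]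
        apply congrArg sumT
        apply List.map_congr_left
        intro Vj hVj
        show Ty.unit (UTy.replAux X U c (UTy.msubst Vj U0)) = _
        rw [UTy.replAux_msubst Vj U0 X U c, hlen Vj hVj]
        rfl
      have P1 := ih1 c
      rw [e1] at P1
      have P2 := ih2 c
      rw [e2] at P2
      have key := Typing.arrE (k := k) (by simpa using hTs) (by simpa using hVs)
        (by
          intro V' hV'
          rcases List.mem_map.1 hV' with ⟨Vj, hVj, rfl⟩
          simp [hlen Vj hVj]) P1 P2
      have e3 : Ty.replAux X U c
            (sumT ((Ts.map fun Ti => Vs.map fun Vj => Ty.msubst Vj Ti).flatten))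
          = sumT (((Ts.map (Ty.replAux X U (c+k))).map
              fun Ti => (Vs.map (replList X U c)).map fun Vj => Ty.msubst Vj Ti).flatten) := by
        rw [sumT_hom (Ty.replAux X U c) (fun _ _ => rfl) rfl, List.map_flatten]
        apply congrArg sumT
        apply congrArg List.flatten
        rw [List.map_map, List.map_map]
        apply List.map_congr_left
        intro Ti _
        simp only [Function.comp]
        rw [List.map_map, List.map_map]
        apply List.map_congr_left
        intro Vj hVj
        simp only [Function.comp]
        rw [Ty.replAux_msubst Vj Ti X U c, hlen Vj hVj]
      rw [e3]
      exact key

theorem Typing.shift_typed {Γ : List UTy} {t : Tm} {T : Ty} (h : Typing Γ t T) (d : ℕ) :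
    ∀ c, Typing (Γ.map (UTy.shift d c)) t (Ty.shift d c T) := by
  induction h with
  | @ax Γ n U0 hn =>
      intro c
      exact Typing.ax (by simp [List.getElem?_map, hn])
  | axZero => intro c; exact Typing.axZero
  | equiv h heq ih => intro c; exact (ih c).equiv (heq.shift_congr d c)
  | arrI h ih => intro c; exact Typing.arrI (ih c)
  | addI h1 h2 ih1 ih2 => intro c; exact Typing.addI (ih1 c) (ih2 c)
  | @allE Γ t U0 V h ih =>
      intro c
      have h2 := Typing.allE (UTy.shift d c V) (ih c)
      have e := UTy.shift_subst U0 V d 0 c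
      simp only [Nat.zero_add] at e
      show Typing _ t (.unit (UTy.shift d c (UTy.subst 0 V U0)))
      rw [e]
      exact h2
  | allI h ih =>
      intro c
      have h2 := ih (c+1)
      rw [liftCtx_map_shift] at h2
      exact Typing.allI h2
  | @arrE Γ t u k U0 Ts Vs hTs hVs hlen h1 h2 ih1 ih2 =>
      intro c
      have e1 : Ty.shift d c (sumT (Ts.map fun Ti => .unit (allN k (.arrow U0 Ti))))
          = sumT ((Ts.map (Ty.shift d (c+k))).map
              fun Ti => .unit (allN k (.arrow (UTy.shift d (c+k) U0) Ti))) := by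
        rw [sumT_hom (Ty.shift d c) (fun _ _ => rfl) rfl, List.map_map, List.map_map]
        apply congrArg sumT
        apply List.map_congr_left
        intro Ti _
        show Ty.unit (UTy.shift d c (allN k (.arrow U0 Ti))) = _
        rw [UTy.shift_allN]
        rfl
      have e2 : Ty.shift d c (sumT (Vs.map fun Vj => .unit (UTy.msubst Vj U0)))
          = sumT ((Vs.map (shiftList d c)).map
              fun Vj => .unit (UTy.msubst Vj (UTy.shift d (c+k) U0))) := by
        rw [sumT_hom (Ty.shift d c) (fun _ _ => rfl) rfl, List.map_map, List.map_map]
        apply congrArg sumT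
        apply List.map_congr_left
        intro Vj hVj
        show Ty.unit (UTy.shift d c (UTy.msubst Vj U0)) = _
        rw [UTy.shift_msubst Vj U0 d c, hlen Vj hVj]
        rfl
      have P1 := ih1 c
      rw [e1] at P1
      have P2 := ih2 c
      rw [e2] at P2
      have key := Typing.arrE (k := k) (by simpa using hTs) (by simpa using hVs)
        (by
          intro V' hV'
          rcases List.mem_map.1 hV' with ⟨Vj, hVj, rfl⟩
          simp [hlen Vj hVj]) P1 P2
      have e3 : Ty.shift d c
            (sumT ((Ts.map fun Ti => Vs.map fun Vj => Ty.msubst Vj Ti).flatten))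
          = sumT (((Ts.map (Ty.shift d (c+k))).map
              fun Ti => (Vs.map (shiftList d c)).map fun Vj => Ty.msubst Vj Ti).flatten) := by
        rw [sumT_hom (Ty.shift d c) (fun _ _ => rfl) rfl, List.map_flatten]
        apply congrArg sumT
        apply congrArg List.flatten
        rw [List.map_map, List.map_map]
        apply List.map_congr_left
        intro Ti _
        simp only [Function.comp]
        rw [List.map_map, List.map_map]
        apply List.map_congr_left
        intro Vj hVj
        simp only [Function.comp]
        rw [Ty.shift_msubst Vj Ti d c, hlen Vj hVj]
      rw [e3]
      exact key
/-! ### Term-level weakening and substitution -/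

theorem liftCtx_append (Γ Δ : List UTy) : liftCtx (Γ ++ Δ) = liftCtx Γ ++ liftCtx Δ := by
  simp [liftCtx]

@[simp] theorem liftCtx_length (Γ : List UTy) : (liftCtx Γ).length = Γ.length := by
  simp [liftCtx]

theorem Typing.weaken {Γ : List UTy} {t : Tm} {T : Ty} (h : Typing Γ t T) :
    ∀ (Γ₁ Γ₂ Δ : List UTy), Γ = Γ₁ ++ Γ₂ →
      Typing (Γ₁ ++ Δ ++ Γ₂) (Tm.shift Δ.length Γ₁.length t) T := by
  induction h with
  | @ax Γ n U0 hn =>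
      intro Γ₁ Γ₂ Δ hΓ
      subst hΓ
      by_cases hlt : n < Γ₁.length
      · have e : Tm.shift Δ.length Γ₁.length (Tm.var n) = Tm.var n := by
          simp only [Tm.shift]; rw [if_pos hlt]
        rw [e]
        apply Typing.ax
        rw [List.getElem?_append_left (by simp; omega),
            List.getElem?_append_left (by simpa using hlt)]
        rw [List.getElem?_append_left hlt] at hn
        exact hn
      · have e : Tm.shift Δ.length Γ₁.length (Tm.var n) = Tm.var (n + Δ.length) := by
          simp only [Tm.shift]; rw [if_neg hlt]
        rw [e]
        apply Typing.ax
        rw [List.getElem?_append_right (by simp; omega)]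
        rw [List.getElem?_append_right (by omega)] at hn
        simp only [List.length_append]
        rw [show n + Δ.length - (Γ₁.length + Δ.length) = n - Γ₁.length by omega]
        exact hn
  | axZero => intro Γ₁ Γ₂ Δ hΓ; exact Typing.axZero
  | equiv h heq ih => intro Γ₁ Γ₂ Δ hΓ; exact (ih Γ₁ Γ₂ Δ hΓ).equiv heq
  | @arrI Γ U0 t T h ih =>
      intro Γ₁ Γ₂ Δ hΓ
      subst hΓ
      exact Typing.arrI (ih (U0 :: Γ₁) Γ₂ Δ rfl)
  | addI h1 h2 ih1 ih2 =>
      intro Γ₁ Γ₂ Δ hΓ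
      exact Typing.addI (ih1 Γ₁ Γ₂ Δ hΓ) (ih2 Γ₁ Γ₂ Δ hΓ)
  | allE V h ih =>
      intro Γ₁ Γ₂ Δ hΓ
      exact Typing.allE V (ih Γ₁ Γ₂ Δ hΓ)
  | allI h ih =>
      intro Γ₁ Γ₂ Δ hΓ
      subst hΓ
      have h2 := ih (liftCtx Γ₁) (liftCtx Γ₂) (liftCtx Δ) (by rw [liftCtx_append])
      simp only [liftCtx_length] at h2
      rw [← liftCtx_append, ← liftCtx_append] at h2
      exact Typing.allI h2
  | arrE hTs hVs hlen h1 h2 ih1 ih2 =>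
      intro Γ₁ Γ₂ Δ hΓ
      exact Typing.arrE hTs hVs hlen (ih1 Γ₁ Γ₂ Δ hΓ) (ih2 Γ₁ Γ₂ Δ hΓ)

theorem Typing.subst_typed {Γ' : List UTy} {t : Tm} {T : Ty} (h : Typing Γ' t T) :
    ∀ (Γ₁ : List UTy) (U : UTy) (Γ₂ : List UTy) (v : Tm), Γ' = Γ₁ ++ U :: Γ₂ →
      Typing Γ₂ v (.unit U) → Typing (Γ₁ ++ Γ₂) (Tm.subst Γ₁.length v t) T := by
  induction h with
  | @ax Γ n U0 hn =>
      intro Γ₁ U Γ₂ v hΓ hv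
      subst hΓ
      rcases Nat.lt_trichotomy n Γ₁.length with hlt | heq | hgt
      · have e : Tm.subst Γ₁.length v (Tm.var n) = Tm.var n := by
          simp only [Tm.subst]; rw [if_neg (by omega), if_neg (by omega)]
        rw [e]
        apply Typing.ax
        rw [List.getElem?_append_left hlt]
        rw [List.getElem?_append_left hlt] at hn
        exact hn
      · have e : Tm.subst Γ₁.length v (Tm.var n) = Tm.shift Γ₁.length 0 v := by
          simp only [Tm.subst]; rw [if_pos heq]
        rw [e]
        have hU : U0 = U := by
          rw [List.getElem?_append_right (by omega), heq] at hn
          simp at hn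
          exact hn.symm
        subst hU
        have := hv.weaken [] Γ₂ Γ₁ rfl
        simpa using this
      · have e : Tm.subst Γ₁.length v (Tm.var n) = Tm.var (n - 1) := by
          simp only [Tm.subst]; rw [if_neg (by omega), if_pos (by omega)]
        rw [e]
        apply Typing.ax
        rw [List.getElem?_append_right (show Γ₁.length ≤ n - 1 by omega)]
        rw [List.getElem?_append_right (show Γ₁.length ≤ n by omega)] at hn
        have e2 : n - Γ₁.length = (n - 1 - Γ₁.length) + 1 := by omega
        rw [e2] at hn
        simpa using hn
  | axZero => intro Γ₁ U Γ₂ v hΓ hv; exact Typing.axZero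
  | equiv h heq ih => intro Γ₁ U Γ₂ v hΓ hv; exact (ih Γ₁ U Γ₂ v hΓ hv).equiv heq
  | @arrI Γ U0 t T h ih =>
      intro Γ₁ U Γ₂ v hΓ hv
      subst hΓ
      exact Typing.arrI (ih (U0 :: Γ₁) U Γ₂ v rfl hv)
  | addI h1 h2 ih1 ih2 =>
      intro Γ₁ U Γ₂ v hΓ hv
      exact Typing.addI (ih1 Γ₁ U Γ₂ v hΓ hv) (ih2 Γ₁ U Γ₂ v hΓ hv)
  | allE V h ih =>
      intro Γ₁ U Γ₂ v hΓ hv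
      exact Typing.allE V (ih Γ₁ U Γ₂ v hΓ hv)
  | allI h ih =>
      intro Γ₁ U Γ₂ v hΓ hv
      subst hΓ
      have hv' : Typing (liftCtx Γ₂) v (.unit (UTy.shift 1 0 U)) := hv.shift_typed 1 0
      have h2 := ih (liftCtx Γ₁) (UTy.shift 1 0 U) (liftCtx Γ₂) v
        (by rw [liftCtx_append]; rfl) hv'
      simp only [liftCtx_length] at h2
      rw [← liftCtx_append] at h2
      exact Typing.allI h2
  | arrE hTs hVs hlen h1 h2 ih1 ih2 =>
      intro Γ₁ U Γ₂ v hΓ hv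
      exact Typing.arrE hTs hVs hlen (ih1 Γ₁ U Γ₂ v hΓ hv) (ih2 Γ₁ U Γ₂ v hΓ hv)
/-- **Substitution lemma** (Lemma 8).
(1) If `Γ ⊢ t : T` then `Γ[U/X] ⊢ t : T[U/X]`.
(2) If `Γ, x:U ⊢ t : T` and `Γ ⊢ v : U` with `v` a value, then
`Γ ⊢ t[v/x] : T`. -/
theorem substitution_lemma :
    (∀ (Γ : List UTy) (t : Tm) (T : Ty) (X : ℕ) (U : UTy),
      Typing Γ t T → Typing (Γ.map (UTy.repl X U)) t (Ty.repl X U T)) ∧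
    (∀ (Γ : List UTy) (t v : Tm) (U : UTy) (T : Ty), Tm.IsValue v →
      Typing (U :: Γ) t T → Typing Γ v (.unit U) →
      Typing Γ (Tm.subst 0 v t) T) := by
  constructor
  · intro Γ t T X U h
    have h0 := h.replAux_typed X U 0
    have e : Γ.map (UTy.repl X U) = Γ.map (UTy.replAux X U 0) := by
      apply List.map_congr_left; intro A _; rfl
    rw [e, Ty.repl]
    exact h0
  · intro Γ t v U T _hval ht hv
    have := ht.subst_typed [] U Γ v rfl hv
    simpa using this
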